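/- Let G be a finitely generated group. Then G satisfies condition (2) if and only if the quotient group G/Z(G) of G by its center is periodic (every element of G/Z(G) has finite order). -/
import Mathlib


theorem cond2_iff_center_quotient_periodic_of_fg (G : Type*) [Group G]
    (hfg : Group.FG G) :
    (∀ g h : G, ∃ n : ℕ, 0 < n ∧ g * h ^ n = h ^ n * g) ↔
    (∀ x : G ⧸ Subgroup.center G, IsOfFinOrder x) := by
  constructor
  · intro hc x
    obtain ⟨h, rfl⟩ := QuotientGroup.mk_surjective x
    obtain ⟨S, hS⟩ := hfg.1
    choose f hf1 hf2 using fun g : G => hc g h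
    set n := ∏ g ∈ S, f g with hn
    have hnpos : 0 < n := Finset.prod_pos fun g _ => hf1 g
    have hcen : h ^ n ∈ Subgroup.center G := by
      rw [Subgroup.mem_center_iff]
      intro g
      have hg : g ∈ Subgroup.closure (S : Set G) := by rw [hS]; trivial
      have key : Commute g (h ^ n) := by
        refine Subgroup.closure_induction (fun s hs => ?_) (Commute.one_left _)
          (fun a b _ _ ha hb => ha.mul_left hb) (fun a _ ha => ha.inv_left) hg
        have hdvd : f s ∣ n := Finset.dvd_prod_of_mem f hs
        obtain ⟨m, hm⟩ := hdvd
        have hcomm : Commute s (h ^ f s) := hf2 s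
        rw [hm, pow_mul]
        exact hcomm.pow_right m
      exact key.eq
    rw [isOfFinOrder_iff_pow_eq_one]
    refine ⟨n, hnpos, ?_⟩
    rw [← QuotientGroup.mk_pow, QuotientGroup.eq_one_iff]
    exact hcen
  · intro hp g h
    obtain ⟨n, hn, h1⟩ := (isOfFinOrder_iff_pow_eq_one).mp
      (hp ((h : G ⧸ Subgroup.center G)))
    have hcen : h ^ n ∈ Subgroup.center G := by
      rw [← QuotientGroup.eq_one_iff, QuotientGroup.mk_pow]
      exact h1
    exact ⟨n, hn, Subgroup.mem_center_iff.mp hcen g⟩
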